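/- arXiv:math/0505536 — 4 statements merged into one kernel-verified Lean document; each statement's English description precedes it below -/
import Mathlib

section
/- Let Θ: ℝ^m → ℝ^m be L-Lipschitz with 0 ≤ L < 1, and let φ_n: ℝ^{nm} → ℝ^{nm} map (z_0, y_1, …, y_{n-1}) to (z_0, z_1, …, z_{n-1}) via the recursion z_{k+1} = Θ(z_k) + y_{k+1}. Then φ_n is Lipschitz on (ℝ^{nm}, ℓ²) with Lipschitz constant at most (1-L)^{-1}. -/
open MeasureTheory Real

variable {m : ℕ}

/-- The solution sequence of the recursion `z_{k+1} = Θ(z_k) + y_{k+1}`, where the input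
`w` encodes `w 0 = z_0` and `w k = y_k` for `k ≥ 1`. -/
noncomputable def armaSeq (Θ : EuclideanSpace ℝ (Fin m) → EuclideanSpace ℝ (Fin m))
    (w : ℕ → EuclideanSpace ℝ (Fin m)) : ℕ → EuclideanSpace ℝ (Fin m)
  | 0 => w 0
  | k + 1 => Θ (armaSeq Θ w k) + w (k + 1)

/-- The map `φ_n : (z_0, y_1, …, y_{n-1}) ↦ (z_0, z_1, …, z_{n-1})` on `(ℝ^{nm}, ℓ²)`. -/
noncomputable def armaMap (n : ℕ) (Θ : EuclideanSpace ℝ (Fin m) → EuclideanSpace ℝ (Fin m))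
    (w : PiLp 2 (fun _ : Fin n => EuclideanSpace ℝ (Fin m))) :
    PiLp 2 (fun _ : Fin n => EuclideanSpace ℝ (Fin m)) :=
  WithLp.toLp 2 (fun i => armaSeq Θ (fun k => if h : k < n then w ⟨k, h⟩ else 0) (i : ℕ))

lemma dist_sq_pilp {n : ℕ} (f g : PiLp 2 (fun _ : Fin n => EuclideanSpace ℝ (Fin m))) :
    dist f g ^ 2 = ∑ i, dist (f i) (g i) ^ 2 := by
  rw [dist_eq_norm, PiLp.norm_sq_eq_of_L2]
  exact Finset.sum_congr rfl fun i _ => by rw [dist_eq_norm]; rfl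

/-- If `Θ` is `L`-Lipschitz with `0 ≤ L < 1`, then `φ_n` is Lipschitz on `(ℝ^{nm}, ℓ²)`
with constant at most `(1 - L)⁻¹`. -/
theorem armaMap_lipschitz_of_lt_one (n : ℕ) (L : ℝ) (hL0 : 0 ≤ L) (hL1 : L < 1)
    (Θ : EuclideanSpace ℝ (Fin m) → EuclideanSpace ℝ (Fin m))
    (hΘ : LipschitzWith (Real.toNNReal L) Θ) :
    ∀ w w' : PiLp 2 (fun _ : Fin n => EuclideanSpace ℝ (Fin m)),
      dist (armaMap n Θ w) (armaMap n Θ w') ≤ (1 - L)⁻¹ * dist w w' := by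
  intro w w'
  have h1L : (0:ℝ) < 1 - L := by linarith
  set ext : PiLp 2 (fun _ : Fin n => EuclideanSpace ℝ (Fin m)) → ℕ → EuclideanSpace ℝ (Fin m) :=
    fun v k => if h : k < n then v ⟨k, h⟩ else 0 with hext
  set z := armaSeq Θ (ext w) with hz
  set z' := armaSeq Θ (ext w') with hz'
  set d : ℕ → ℝ := fun k => dist (z k) (z' k) with hd
  set e : ℕ → ℝ := fun k => dist (ext w k) (ext w' k) with he
  have hd0 : ∀ k, 0 ≤ d k := fun k => dist_nonneg
  have he0 : ∀ k, 0 ≤ e k := fun k => dist_nonneg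
  -- pointwise recursion
  have hrec : ∀ k, d (k+1) ≤ L * d k + e (k+1) := by
    intro k
    have := hΘ.dist_le_mul (z k) (z' k)
    calc d (k+1) = dist (Θ (z k) + ext w (k+1)) (Θ (z' k) + ext w' (k+1)) := rfl
      _ ≤ dist (Θ (z k)) (Θ (z' k)) + dist (ext w (k+1)) (ext w' (k+1)) := dist_add_add_le _ _ _ _
      _ ≤ L * d k + e (k+1) := by
          have h2 : (Real.toNNReal L : ℝ) = L := Real.coe_toNNReal L hL0
          gcongr
          rw [← h2]; exact this
  -- squared recursion
  have hsq : ∀ k, d (k+1) ^ 2 ≤ L * d k ^ 2 + (1 - L)⁻¹ * e (k+1) ^ 2 := by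
    intro k
    have h := hrec k
    have key : (L * d k + e (k+1)) ^ 2 ≤ L * d k ^ 2 + (1 - L)⁻¹ * e (k+1) ^ 2 := by
      have h3 : (1 - L)⁻¹ * (1 - L) = 1 := inv_mul_cancel₀ h1L.ne'
      nlinarith [sq_nonneg ((1 - L) * d k - e (k+1)), hd0 k, he0 (k+1), sq_nonneg (e (k+1)),
        mul_pos (inv_pos.mpr h1L) h1L, mul_nonneg hL0 (sq_nonneg (d k)),
        mul_nonneg (inv_nonneg.mpr h1L.le) (sq_nonneg (e (k+1)))]
    calc d (k+1) ^ 2 ≤ (L * d k + e (k+1)) ^ 2 := by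
          apply pow_le_pow_left₀ (hd0 _) h
      _ ≤ _ := key
    done
  -- sum inequality: S ≤ (1-L)⁻² E
  have hd0e : d 0 = e 0 := rfl
  set S := ∑ k ∈ Finset.range n, d k ^ 2 with hS
  set E := ∑ k ∈ Finset.range n, e k ^ 2 with hE
  have hSnn : 0 ≤ S := Finset.sum_nonneg fun k _ => sq_nonneg _
  have hEnn : 0 ≤ E := Finset.sum_nonneg fun k _ => sq_nonneg _
  have hmain : S ≤ (1 - L)⁻¹ ^ 2 * E := by
    rcases Nat.eq_zero_or_pos n with hn | hn
    · simp [hS, hE, hn]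
    obtain ⟨p, rfl⟩ := Nat.exists_eq_add_of_lt hn
    rw [zero_add] at *
    have hsplit : S = d 0 ^ 2 + ∑ k ∈ Finset.range p, d (k+1) ^ 2 := by
      rw [hS, Finset.sum_range_succ']
      ring
    have hesplit : e 0 ^ 2 + ∑ k ∈ Finset.range p, e (k+1) ^ 2 = E := by
      rw [hE, Finset.sum_range_succ']
      ring
    have h1 : ∑ k ∈ Finset.range p, d (k+1) ^ 2
        ≤ L * (∑ k ∈ Finset.range p, d k ^ 2) + (1 - L)⁻¹ * ∑ k ∈ Finset.range p, e (k+1) ^ 2 := by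
      rw [Finset.mul_sum, Finset.mul_sum, ← Finset.sum_add_distrib]
      exact Finset.sum_le_sum fun k _ => hsq k
    have h2 : ∑ k ∈ Finset.range p, d k ^ 2 ≤ S := by
      rw [hS]
      exact Finset.sum_le_sum_of_subset_of_nonneg
        (Finset.range_subset_range.mpr (Nat.le_succ p)) (fun k _ _ => sq_nonneg _)
    have hinv1 : (1:ℝ) ≤ (1 - L)⁻¹ := by
      rw [le_inv_comm₀ one_pos h1L]
      linarith
    have hS2 : S ≤ L * S + (1 - L)⁻¹ * E := by
      have hdd : d 0 ^ 2 = e 0 ^ 2 := by rw [hd0e]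
      have hmul := mul_le_mul_of_nonneg_left h2 hL0
      have hh : S ≤ e 0 ^ 2 + L * S + (1 - L)⁻¹ * ∑ k ∈ Finset.range p, e (k+1) ^ 2 := by
        linarith [hsplit, h1]
      have he1 : e 0 ^ 2 ≤ (1 - L)⁻¹ * e 0 ^ 2 := le_mul_of_one_le_left (sq_nonneg _) hinv1
      have hl : (1 - L)⁻¹ * (e 0 ^ 2 + ∑ k ∈ Finset.range p, e (k+1) ^ 2) = (1 - L)⁻¹ * E := by
        rw [hesplit]
      rw [mul_add] at hl
      linarith
    -- (1-L) S ≤ (1-L)⁻¹ E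
    have : (1 - L) * S ≤ (1 - L)⁻¹ * E := by nlinarith
    rw [← le_div_iff₀' h1L] at this
    calc S ≤ (1 - L)⁻¹ * E / (1 - L) := this
      _ = (1 - L)⁻¹ ^ 2 * E := by rw [div_eq_mul_inv, sq]; ring
  -- conclude
  have hdl : dist (armaMap n Θ w) (armaMap n Θ w') ^ 2 = S := by
    rw [dist_sq_pilp, hS, ← Fin.sum_univ_eq_sum_range]
    rfl
  have hdr : ((1 - L)⁻¹ * dist w w') ^ 2 = (1 - L)⁻¹ ^ 2 * E := by
    rw [mul_pow, dist_sq_pilp, hE, ← Fin.sum_univ_eq_sum_range]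
    congr 1
    apply Finset.sum_congr rfl
    intro i _
    simp [he, hext, i.isLt]
  have hfin : dist (armaMap n Θ w) (armaMap n Θ w') ^ 2 ≤ ((1 - L)⁻¹ * dist w w') ^ 2 := by
    rw [hdl, hdr]; exact hmain
  have hrhs : 0 ≤ (1 - L)⁻¹ * dist w w' :=
    mul_nonneg (inv_nonneg.mpr h1L.le) dist_nonneg
  exact (pow_le_pow_iff_left₀ dist_nonneg hrhs two_ne_zero).mp hfin
end

section
/- Let Θ: ℝ^m → ℝ^m be L-Lipschitz with L ≥ 1, and let φ_n be as above. Then the Lipschitz seminorm of φ_n on (ℝ^{nm}, ℓ²) is at most ((1+n) Σ_{k=0}^{n-1} ((1+1/n)L²)^k)^{1/2}; in particular it is at most (n(n+1)(e-1))^{1/2} when L = 1. -/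
open MeasureTheory Real Finset

variable {m : ℕ}

set_option maxHeartbeats 1600000 in
/-- If `Θ` is `L`-Lipschitz with `L ≥ 1`, then the Lipschitz seminorm of `φ_n` on
`(ℝ^{nm}, ℓ²)` is at most `((1+n) ∑_{k=0}^{n-1} ((1+1/n)L²)^k)^{1/2}`; in particular at
most `(n(n+1)(e-1))^{1/2}` when `L = 1`. -/
theorem armaMap_lipschitz_of_ge_one (n : ℕ) (hn : 1 ≤ n) (L : ℝ) (hL : 1 ≤ L)
    (Θ : EuclideanSpace ℝ (Fin m) → EuclideanSpace ℝ (Fin m))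
    (hΘ : LipschitzWith (Real.toNNReal L) Θ) :
    (∀ w w' : PiLp 2 (fun _ : Fin n => EuclideanSpace ℝ (Fin m)),
      dist (armaMap n Θ w) (armaMap n Θ w') ≤
        Real.sqrt ((1 + n) * ∑ k ∈ range n, ((1 + 1 / n) * L ^ 2) ^ k) * dist w w') ∧
    (L = 1 → ∀ w w' : PiLp 2 (fun _ : Fin n => EuclideanSpace ℝ (Fin m)),
      dist (armaMap n Θ w) (armaMap n Θ w') ≤
        Real.sqrt (n * (n + 1) * (Real.exp 1 - 1)) * dist w w') := by
  have hn0 : (0:ℝ) < n := by exact_mod_cast hn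
  have hL0 : (0:ℝ) ≤ L := le_trans zero_le_one hL
  set r : ℝ := (1 + 1/n) * L ^ 2 with hrdef
  have hr1 : (1:ℝ) ≤ r := by
    have h1 : (1:ℝ) ≤ 1 + 1/n := by
      have : (0:ℝ) < 1/n := by positivity
      linarith
    have h2 : (1:ℝ) ≤ L ^ 2 := by nlinarith
    calc (1:ℝ) = 1 * 1 := by ring
      _ ≤ (1 + 1/n) * L ^ 2 := mul_le_mul h1 h2 zero_le_one (by linarith)
  have hr0 : (0:ℝ) ≤ r := le_trans zero_le_one hr1
  have key : ∀ w w' : PiLp 2 (fun _ : Fin n => EuclideanSpace ℝ (Fin m)),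
      dist (armaMap n Θ w) (armaMap n Θ w') ≤
        Real.sqrt ((1 + n) * ∑ k ∈ range n, r ^ k) * dist w w' := by
    intro w w'
    set wext : ℕ → EuclideanSpace ℝ (Fin m) :=
      fun k => if h : k < n then w ⟨k, h⟩ else 0 with hwext
    set wext' : ℕ → EuclideanSpace ℝ (Fin m) :=
      fun k => if h : k < n then w' ⟨k, h⟩ else 0 with hwext'
    set z := armaSeq Θ wext with hz
    set z' := armaSeq Θ wext' with hz'
    set δ : ℕ → ℝ := fun k => dist (z k) (z' k) with hδ
    set ε : ℕ → ℝ := fun k => dist (wext k) (wext' k) with hε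
    have hδ0 : ∀ k, 0 ≤ δ k := fun k => dist_nonneg
    have hε0 : ∀ k, 0 ≤ ε k := fun k => dist_nonneg
    have hrec : ∀ k, δ (k+1) ≤ L * δ k + ε (k+1) := by
      intro k
      have h1 : dist (Θ (z k) + wext (k+1)) (Θ (z' k) + wext' (k+1)) ≤
          dist (Θ (z k)) (Θ (z' k)) + dist (wext (k+1)) (wext' (k+1)) := dist_add_add_le _ _ _ _
      have h2 : dist (Θ (z k)) (Θ (z' k)) ≤ L * dist (z k) (z' k) := by
        have := hΘ.dist_le_mul (z k) (z' k)
        rwa [Real.coe_toNNReal L hL0] at this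
      calc δ (k+1) = dist (Θ (z k) + wext (k+1)) (Θ (z' k) + wext' (k+1)) := rfl
        _ ≤ dist (Θ (z k)) (Θ (z' k)) + dist (wext (k+1)) (wext' (k+1)) := h1
        _ ≤ L * δ k + ε (k+1) := by exact add_le_add h2 le_rfl
    have hsq : ∀ k, δ (k+1) ^ 2 ≤ r * δ k ^ 2 + (1 + n) * ε (k+1) ^ 2 := by
      intro k
      have h1 := hrec k
      have h2 := hδ0 (k+1)
      have h3 := hδ0 k
      have h4 := hε0 (k+1)
      have step1 : δ (k+1) ^ 2 ≤ (L * δ k + ε (k+1)) ^ 2 := by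
        refine pow_le_pow_left₀ h2 h1 2
      have hmain : (n:ℝ) * δ (k+1) ^ 2 ≤
          ((n:ℝ)+1) * L ^ 2 * δ k ^ 2 + (n:ℝ) * (1+(n:ℝ)) * ε (k+1) ^ 2 := by
        nlinarith [mul_le_mul_of_nonneg_left step1 (le_of_lt hn0),
          sq_nonneg (L * δ k - (n:ℝ) * ε (k+1))]
      have heq : r * δ k ^ 2 + (1+(n:ℝ)) * ε (k+1) ^ 2 =
          (((n:ℝ)+1) * L ^ 2 * δ k ^ 2 + (n:ℝ) * (1+(n:ℝ)) * ε (k+1) ^ 2) / n := by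
        rw [hrdef]; field_simp
      rw [heq, le_div_iff₀ hn0]
      nlinarith [hmain]
    have hind : ∀ k, δ k ^ 2 ≤ (1 + n) * ∑ j ∈ range (k+1), r ^ (k - j) * ε j ^ 2 := by
      intro k
      induction k with
      | zero =>
        have hδε : δ 0 = ε 0 := rfl
        simp only [zero_add, Finset.sum_range_one, Nat.sub_self, pow_zero, one_mul, hδε]
        nlinarith [sq_nonneg (ε 0), hn0]
      | succ k ih =>
        have h1 := hsq k
        have h2 : r * ((1 + n) * ∑ j ∈ range (k+1), r ^ (k - j) * ε j ^ 2) =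
            (1 + n) * ∑ j ∈ range (k+1), r ^ (k + 1 - j) * ε j ^ 2 := by
          rw [← mul_assoc, mul_comm r (1 + (n:ℝ)), mul_assoc, Finset.mul_sum]
          congr 1
          refine Finset.sum_congr rfl fun j hj => ?_
          have hjk : j ≤ k := Nat.lt_succ_iff.mp (Finset.mem_range.mp hj)
          rw [← mul_assoc, ← pow_succ', Nat.succ_sub hjk]
        calc δ (k+1) ^ 2 ≤ r * δ k ^ 2 + (1 + n) * ε (k+1) ^ 2 := h1
          _ ≤ r * ((1 + n) * ∑ j ∈ range (k+1), r ^ (k - j) * ε j ^ 2) + (1 + n) * ε (k+1) ^ 2 := by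
              have := mul_le_mul_of_nonneg_left ih hr0
              linarith
          _ = (1 + n) * ∑ j ∈ range (k+1), r ^ (k + 1 - j) * ε j ^ 2 + (1 + n) * ε (k+1) ^ 2 := by
              rw [h2]
          _ = (1 + n) * ∑ j ∈ range (k+2), r ^ (k + 1 - j) * ε j ^ 2 := by
              rw [Finset.sum_range_succ (f := fun j => r ^ (k + 1 - j) * ε j ^ 2) (k+1)]
              simp [mul_add]
    have hsum : ∑ k ∈ range n, δ k ^ 2 ≤
        ((1 + n) * ∑ i ∈ range n, r ^ i) * ∑ j ∈ range n, ε j ^ 2 := by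
      calc ∑ k ∈ range n, δ k ^ 2
          ≤ ∑ k ∈ range n, (1 + n) * ∑ j ∈ range (k+1), r ^ (k - j) * ε j ^ 2 :=
            Finset.sum_le_sum fun k _ => hind k
        _ = (1 + n) * ∑ k ∈ range n, ∑ j ∈ range (k+1), r ^ (k - j) * ε j ^ 2 := by
            rw [Finset.mul_sum]
        _ = (1 + n) * ∑ j ∈ range n, ∑ k ∈ Finset.Ico j n, r ^ (k - j) * ε j ^ 2 := by
            congr 1
            refine Finset.sum_comm' ?_
            intro k j
            simp only [Finset.mem_range, Finset.mem_Ico]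
            omega
        _ ≤ (1 + n) * ∑ j ∈ range n, (∑ i ∈ range n, r ^ i) * ε j ^ 2 := by
            refine mul_le_mul_of_nonneg_left (Finset.sum_le_sum fun j hj => ?_) (by positivity)
            rw [← Finset.sum_mul]
            refine mul_le_mul_of_nonneg_right ?_ (sq_nonneg _)
            rw [Finset.sum_Ico_eq_sum_range]
            simp only [Nat.add_sub_cancel_left]
            refine Finset.sum_le_sum_of_subset_of_nonneg ?_ (fun i _ _ => by positivity)
            exact Finset.range_subset_range.mpr (Nat.sub_le n j)
        _ = ((1 + n) * ∑ i ∈ range n, r ^ i) * ∑ j ∈ range n, ε j ^ 2 := by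
            rw [← Finset.mul_sum, mul_assoc]
    have hdistw : Real.sqrt (∑ j ∈ range n, ε j ^ 2) = dist w w' := by
      rw [PiLp.dist_eq_of_L2]
      congr 1
      rw [← Fin.sum_univ_eq_sum_range (fun j => ε j ^ 2) n]
      refine Finset.sum_congr rfl fun i _ => ?_
      simp only [hε, hwext, hwext', i.isLt, dif_pos, Fin.eta]
    have hdistz : dist (armaMap n Θ w) (armaMap n Θ w') = Real.sqrt (∑ k ∈ range n, δ k ^ 2) := by
      rw [PiLp.dist_eq_of_L2]
      congr 1
      rw [← Fin.sum_univ_eq_sum_range (fun k => δ k ^ 2) n]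
      rw [hδ, hz, hz', hwext, hwext']; rfl
    rw [hdistz]
    have hA : 0 ≤ (1 + (n:ℝ)) * ∑ i ∈ range n, r ^ i :=
      mul_nonneg (by positivity) (Finset.sum_nonneg fun i _ => pow_nonneg hr0 i)
    calc Real.sqrt (∑ k ∈ range n, δ k ^ 2)
        ≤ Real.sqrt (((1 + n) * ∑ i ∈ range n, r ^ i) * ∑ j ∈ range n, ε j ^ 2) :=
          Real.sqrt_le_sqrt hsum
      _ = Real.sqrt ((1 + n) * ∑ i ∈ range n, r ^ i) * Real.sqrt (∑ j ∈ range n, ε j ^ 2) :=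
          Real.sqrt_mul hA _
      _ = Real.sqrt ((1 + n) * ∑ k ∈ range n, r ^ k) * dist w w' := by rw [hdistw]
  constructor
  · exact key
  · intro hL1 w w'
    subst hL1
    refine le_trans (key w w') (mul_le_mul_of_nonneg_right ?_ dist_nonneg)
    refine Real.sqrt_le_sqrt ?_
    have hrr : r = 1 + 1/n := by rw [hrdef]; ring
    have hne : (n:ℝ) ≠ 0 := ne_of_gt hn0
    have hgeom : ∑ k ∈ range n, r ^ k = n * ((1 + 1/n) ^ n - 1) := by
      rw [hrr, geom_sum_eq (by
        intro h
        have : (1:ℝ)/n = 0 := by linarith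
        simp [hne] at this)]
      field_simp
      ring
    have hexp : (1 + 1/(n:ℝ)) ^ n ≤ Real.exp 1 := by
      have h1 : (1 : ℝ) + 1/n ≤ Real.exp (1/n) := by
        have := Real.add_one_le_exp (1/(n:ℝ))
        linarith
      calc (1 + 1/(n:ℝ)) ^ n ≤ Real.exp (1/n) ^ n := by
            refine pow_le_pow_left₀ (by positivity) h1 n
        _ = Real.exp 1 := by
            rw [← Real.exp_nat_mul]
            congr 1
            field_simp
    rw [hgeom]
    have : (1 + (n:ℝ)) * (n * ((1 + 1/n) ^ n - 1)) ≤ (1 + n) * (n * (Real.exp 1 - 1)) := by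
      refine mul_le_mul_of_nonneg_left (mul_le_mul_of_nonneg_left (by linarith) (le_of_lt hn0)) (by positivity)
    linarith [this]
end

section
/- Let A be an m×m real matrix with spectral radius ρ(A) < 1. Then Σ_{j=0}^∞ ρ^{-j} ‖A^j‖² < ∞ for any ρ with ρ(A)² < ρ < 1 (where ‖·‖ is the operator norm on ℓ²), and there exists an invertible m×m matrix S with ‖S‖‖S^{-1}‖ ≤ Σ_{j=0}^∞ ρ^{-j}‖A^j‖² and a matrix C with ‖C‖ ≤ 1 such that A = √ρ · S^{-1} C S. -/
open Matrix Real

/-- The operator norm of a real square matrix acting on Euclidean space `ℓ²`. -/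
noncomputable def matOpNorm {m : ℕ} (A : Matrix (Fin m) (Fin m) ℝ) : ℝ :=
  ‖Matrix.toEuclideanCLM (𝕜 := ℝ) A‖

open Filter
open scoped Matrix.Norms.L2Operator

namespace RotaAux
variable {m : ℕ}

lemma matOpNorm_eq (A : Matrix (Fin m) (Fin m) ℝ) : matOpNorm A = ‖A‖ := rfl

lemma dot_transpose_mul (c : Matrix (Fin m) (Fin m) ℝ) (v : Fin m → ℝ) :
    v ⬝ᵥ ((cᵀ * c) *ᵥ v) = (c *ᵥ v) ⬝ᵥ (c *ᵥ v) := by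
  rw [← Matrix.mulVec_mulVec, Matrix.dotProduct_mulVec, Matrix.vecMul_transpose]

lemma norm_sq_euclid (y : EuclideanSpace ℝ (Fin m)) :
    ‖y‖ ^ 2 = (WithLp.equiv 2 _ y) ⬝ᵥ (WithLp.equiv 2 _ y) := by
  rw [EuclideanSpace.norm_eq, Real.sq_sqrt (by positivity)]
  simp [dotProduct, sq, Real.norm_eq_abs, abs_mul_abs_self]

lemma clm_apply_sq (M : Matrix (Fin m) (Fin m) ℝ) (x : EuclideanSpace ℝ (Fin m)) :
    ‖(Matrix.toEuclideanCLM (𝕜 := ℝ) M) x‖ ^ 2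
      = (M *ᵥ (WithLp.equiv 2 _ x)) ⬝ᵥ (M *ᵥ (WithLp.equiv 2 _ x)) := by
  rw [norm_sq_euclid]; rfl

lemma dot_self_nonneg (v : Fin m → ℝ) : 0 ≤ v ⬝ᵥ v :=
  Finset.sum_nonneg fun i _ => mul_self_nonneg _

lemma opNorm_le_of_dot (M : Matrix (Fin m) (Fin m) ℝ) (c : ℝ) (hc : 0 ≤ c)
    (h : ∀ v : Fin m → ℝ, (M *ᵥ v) ⬝ᵥ (M *ᵥ v) ≤ c ^ 2 * (v ⬝ᵥ v)) : ‖M‖ ≤ c := by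
  rw [Matrix.l2_opNorm_def]
  refine ContinuousLinearMap.opNorm_le_bound _ hc fun x => ?_
  have h1 : ‖(Matrix.toEuclideanCLM (𝕜 := ℝ) M) x‖ ^ 2 ≤ (c * ‖x‖) ^ 2 := by
    rw [clm_apply_sq, mul_pow, norm_sq_euclid]
    exact h _
  calc ‖(Matrix.toEuclideanCLM (𝕜 := ℝ) M) x‖
      = Real.sqrt (‖(Matrix.toEuclideanCLM (𝕜 := ℝ) M) x‖ ^ 2) :=
        (Real.sqrt_sq (norm_nonneg _)).symm
    _ ≤ Real.sqrt ((c * ‖x‖) ^ 2) := Real.sqrt_le_sqrt h1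
    _ = c * ‖x‖ := Real.sqrt_sq (mul_nonneg hc (norm_nonneg _))

lemma dot_mulVec_le (M : Matrix (Fin m) (Fin m) ℝ) (v : Fin m → ℝ) :
    (M *ᵥ v) ⬝ᵥ (M *ᵥ v) ≤ ‖M‖ ^ 2 * (v ⬝ᵥ v) := by
  set x : EuclideanSpace ℝ (Fin m) := (WithLp.equiv 2 _).symm v with hx
  have hxv : WithLp.equiv 2 (Fin m → ℝ) x = v := rfl
  have h1 := Matrix.toEuclideanCLM (𝕜 := ℝ) M |>.le_opNorm x
  have h2 : ‖(Matrix.toEuclideanCLM (𝕜 := ℝ) M) x‖ ^ 2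
      ≤ (‖(Matrix.toEuclideanCLM (𝕜 := ℝ) M)‖ * ‖x‖) ^ 2 :=
    pow_le_pow_left₀ (norm_nonneg _) h1 2
  calc (M *ᵥ v) ⬝ᵥ (M *ᵥ v) = ‖(Matrix.toEuclideanCLM (𝕜 := ℝ) M) x‖ ^ 2 := by
        rw [clm_apply_sq M x, hxv]
    _ ≤ (‖(Matrix.toEuclideanCLM (𝕜 := ℝ) M)‖ * ‖x‖) ^ 2 := h2
    _ = ‖M‖ ^ 2 * (v ⬝ᵥ v) := by
        rw [mul_pow, norm_sq_euclid x, hxv]; rfl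

noncomputable def dotCLM (v : Fin m → ℝ) :
    Matrix (Fin m) (Fin m) ℝ →L[ℝ] ℝ :=
  LinearMap.toContinuousLinearMap
  { toFun := fun M => v ⬝ᵥ (M *ᵥ v)
    map_add' := fun M N => by simp [Matrix.add_mulVec]
    map_smul' := fun r M => by simp [Matrix.smul_mulVec] }

@[simp] lemma dotCLM_apply (v : Fin m → ℝ) (M : Matrix (Fin m) (Fin m) ℝ) :
    dotCLM v M = v ⬝ᵥ (M *ᵥ v) := rfl

noncomputable def transCLM : Matrix (Fin m) (Fin m) ℝ →L[ℝ] Matrix (Fin m) (Fin m) ℝ :=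
  LinearMap.toContinuousLinearMap
  { toFun := fun M => Mᵀ
    map_add' := fun M N => Matrix.transpose_add M N
    map_smul' := fun r M => Matrix.transpose_smul r M }

@[simp] lemma transCLM_apply (M : Matrix (Fin m) (Fin m) ℝ) : transCLM M = Mᵀ := rfl

noncomputable def reCLM : Matrix (Fin m) (Fin m) ℂ →L[ℝ] Matrix (Fin m) (Fin m) ℝ :=
  haveI : FiniteDimensional ℝ (Matrix (Fin m) (Fin m) ℂ) := Module.Finite.trans ℂ _
  LinearMap.toContinuousLinearMap
  { toFun := fun M => M.map Complex.re
    map_add' := fun M N => by ext i j; simp [Matrix.map_apply]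
    map_smul' := fun r M => by ext i j; simp [Matrix.map_apply, Complex.smul_re] }

@[simp] lemma reCLM_ofReal (M : Matrix (Fin m) (Fin m) ℝ) :
    reCLM (M.map Complex.ofReal) = M := by
  ext i j
  simp [reCLM, Matrix.map_apply]

lemma summable_part {m : ℕ} (A : Matrix (Fin m) (Fin m) ℝ) (ρ : ℝ)
    (hspec : spectralRadius ℂ (A.map (Complex.ofReal)) < 1)
    (hρlt : (spectralRadius ℂ (A.map (Complex.ofReal))) ^ 2 < ENNReal.ofReal ρ)
    (hρ0 : 0 < ρ) :
    Summable (fun j : ℕ => ρ⁻¹ ^ j * ‖A ^ j‖ ^ 2) := by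
  haveI : CompleteSpace (Matrix (Fin m) (Fin m) ℂ) := FiniteDimensional.complete ℂ _
  set B := A.map Complex.ofReal with hB
  set K := ‖(reCLM (m := m))‖ with hK
  have hK0 : 0 ≤ K := hK ▸ ContinuousLinearMap.opNorm_nonneg _
  have hpowmap : ∀ j : ℕ, B ^ j = (A ^ j).map Complex.ofReal := fun j => by
    have h := map_pow (Complex.ofRealHom.mapMatrix (m := Fin m)) A j
    simp only [RingHom.mapMatrix_apply] at h
    exact h.symm
  have hcomp : ∀ j : ℕ, ‖A ^ j‖ ≤ K * ‖B ^ j‖ := fun j => by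
    calc ‖A ^ j‖ = ‖reCLM (B ^ j)‖ := by rw [hpowmap, reCLM_ofReal]
      _ ≤ K * ‖B ^ j‖ := (reCLM).le_opNorm _
  -- choose t
  set σ := spectralRadius ℂ B with hσ
  have hσtop : σ ≠ ⊤ := (hspec.trans_le le_top).ne
  set s := σ.toReal with hs
  have hs0 : 0 ≤ s := ENNReal.toReal_nonneg
  have hσeq : σ = ENNReal.ofReal s := (ENNReal.ofReal_toReal hσtop).symm
  have hs2 : s ^ 2 < ρ := by
    have h : ENNReal.ofReal (s ^ 2) < ENNReal.ofReal ρ := by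
      rw [ENNReal.ofReal_pow hs0, ← hσeq]; exact hρlt
    exact (ENNReal.ofReal_lt_ofReal_iff hρ0).1 h
  have hsρ : s < Real.sqrt ρ := by
    rw [show s = Real.sqrt (s ^ 2) from (Real.sqrt_sq hs0).symm]
    exact Real.sqrt_lt_sqrt (by positivity) hs2
  set t := (s + Real.sqrt ρ) / 2 with ht
  clear_value t
  have ht0 : 0 < t := by
    rw [ht]; have := Real.sqrt_pos.2 hρ0; linarith
  have hst : s < t := by rw [ht]; linarith
  have htρ : t < Real.sqrt ρ := by rw [ht]; linarith
  have ht2 : t ^ 2 < ρ := by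
    nlinarith [Real.sq_sqrt hρ0.le, Real.sqrt_nonneg ρ]
  -- Gelfand
  have hgelf := spectrum.pow_norm_pow_one_div_tendsto_nhds_spectralRadius B
  have hlt : σ < ENNReal.ofReal t := by
    rw [hσeq]; exact (ENNReal.ofReal_lt_ofReal_iff ht0).2 hst
  have hev : ∀ᶠ n : ℕ in atTop, ENNReal.ofReal (‖B ^ n‖ ^ (1 / (n : ℝ))) < ENNReal.ofReal t :=
    hgelf.eventually_lt_const hlt
  have hev2 : ∀ᶠ n in atTop, ‖B ^ n‖ ≤ t ^ n := by
    filter_upwards [hev, Filter.eventually_ge_atTop 1] with n hn hn1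
    have h1 : ‖B ^ n‖ ^ (1 / (n : ℝ)) < t := by
      have := (ENNReal.ofReal_lt_ofReal_iff ht0).1 hn
      exact this
    have hn0 : (n : ℝ) ≠ 0 := Nat.cast_ne_zero.2 (by omega)
    have heq : ‖B ^ n‖ = (‖B ^ n‖ ^ (1 / (n : ℝ))) ^ (n : ℕ) := by
      rw [← Real.rpow_natCast (‖B ^ n‖ ^ (1 / (n : ℝ))) n, ← Real.rpow_mul (norm_nonneg _),
        one_div, inv_mul_cancel₀ hn0, Real.rpow_one]
    rw [heq]
    exact pow_le_pow_left₀ (Real.rpow_nonneg (norm_nonneg _) _) h1.le n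
  have hr1 : t ^ 2 / ρ < 1 := (div_lt_one hρ0).2 ht2
  have hgeo : Summable (fun j : ℕ => K ^ 2 * (t ^ 2 / ρ) ^ j) :=
    (summable_geometric_of_lt_one (by positivity) hr1).mul_left _
  refine Summable.of_norm_bounded_eventually hgeo ?_
  rw [Nat.cofinite_eq_atTop]
  filter_upwards [hev2] with j hj
  have hnn : 0 ≤ ρ⁻¹ ^ j * ‖A ^ j‖ ^ 2 := by positivity
  rw [Real.norm_eq_abs, abs_of_nonneg hnn]
  calc ρ⁻¹ ^ j * ‖A ^ j‖ ^ 2 ≤ ρ⁻¹ ^ j * (K * ‖B ^ j‖) ^ 2 :=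
        mul_le_mul_of_nonneg_left
          (pow_le_pow_left₀ (norm_nonneg _) (hcomp j) 2) (by positivity)
    _ ≤ ρ⁻¹ ^ j * (K * t ^ j) ^ 2 :=
        mul_le_mul_of_nonneg_left
          (pow_le_pow_left₀ (mul_nonneg hK0 (norm_nonneg _))
            (mul_le_mul_of_nonneg_left hj hK0) 2) (by positivity)
    _ = K ^ 2 * (t ^ 2 / ρ) ^ j := by
        have hpow : (t ^ j) ^ 2 = (t ^ 2) ^ j := by
          rw [← pow_mul, ← pow_mul, Nat.mul_comm]
        rw [mul_pow, hpow, div_pow, div_eq_mul_inv, ← inv_pow]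
        ring

end RotaAux

open scoped MatrixOrder

/-- Rota's similarity theorem, quantitative form: if the spectral radius of `A` is `< 1`
and `ρ(A)² < ρ < 1`, then `∑_j ρ^{-j} ‖A^j‖²` converges and there are an invertible `S`
with `‖S‖‖S⁻¹‖ ≤ ∑_j ρ^{-j} ‖A^j‖²` and a contraction `C` with `A = √ρ · S⁻¹ C S`. -/
theorem rota_similarity {m : ℕ} (A : Matrix (Fin m) (Fin m) ℝ) (ρ : ℝ)
    (hspec : spectralRadius ℂ (A.map (Complex.ofReal)) < 1)
    (hρlt : (spectralRadius ℂ (A.map (Complex.ofReal))) ^ 2 < ENNReal.ofReal ρ)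
    (hρ1 : ρ < 1) (hρ0 : 0 < ρ) :
    Summable (fun j : ℕ => ρ⁻¹ ^ j * matOpNorm (A ^ j) ^ 2) ∧
    ∃ S C : Matrix (Fin m) (Fin m) ℝ, IsUnit S ∧ matOpNorm C ≤ 1 ∧
      matOpNorm S * matOpNorm S⁻¹ ≤ ∑' j : ℕ, ρ⁻¹ ^ j * matOpNorm (A ^ j) ^ 2 ∧
      A = Real.sqrt ρ • (S⁻¹ * C * S) := by
  classical
  haveI : CompleteSpace (Matrix (Fin m) (Fin m) ℝ) := FiniteDimensional.complete ℝ _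
  have hf : Summable (fun j : ℕ => ρ⁻¹ ^ j * matOpNorm (A ^ j) ^ 2) :=
    RotaAux.summable_part A ρ hspec hρlt hρ0
  refine ⟨hf, ?_⟩
  set f : ℕ → ℝ := fun j => ρ⁻¹ ^ j * matOpNorm (A ^ j) ^ 2 with hfdef
  have hf' : Summable f := hf
  have hfnn : ∀ j, 0 ≤ f j := fun j => by
    have h1 : (0:ℝ) ≤ matOpNorm (A ^ j) ^ 2 := sq_nonneg _
    have h2 : (0:ℝ) ≤ ρ⁻¹ ^ j := by positivity
    exact mul_nonneg h2 h1
  set g : ℕ → Matrix (Fin m) (Fin m) ℝ := fun j => ρ⁻¹ ^ j • ((A ^ j)ᵀ * (A ^ j)) with hgdef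
  have hnormg : ∀ j, ‖g j‖ = f j := fun j => by
    simp only [hgdef, hfdef]
    rw [norm_smul, Real.norm_eq_abs, abs_pow, abs_inv, abs_of_pos hρ0]
    congr 1
    rw [show (A ^ j)ᵀ = (A ^ j)ᴴ from (Matrix.conjTranspose_eq_transpose_of_trivial _).symm,
      Matrix.l2_opNorm_conjTranspose_mul_self, RotaAux.matOpNorm_eq, sq]
  have hg : Summable g :=
    Summable.of_norm (hf'.congr fun j => (hnormg j).symm)
  set Q : Matrix (Fin m) (Fin m) ℝ := ∑' j, g j with hQdef
  set h : (Fin m → ℝ) → ℕ → ℝ :=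
    fun v j => ρ⁻¹ ^ j * ((A ^ j *ᵥ v) ⬝ᵥ (A ^ j *ᵥ v)) with hhdef
  have hterm : ∀ v j, RotaAux.dotCLM v (g j) = h v j := fun v j => by
    simp only [hgdef, hhdef, RotaAux.dotCLM_apply]
    rw [Matrix.smul_mulVec, dotProduct_smul, smul_eq_mul,
      RotaAux.dot_transpose_mul]
  have hsum_h : ∀ v, Summable (h v) := fun v =>
    (hg.map (RotaAux.dotCLM v).toLinearMap.toAddMonoidHom
      (RotaAux.dotCLM v).continuous).congr fun j => hterm v j
  have hhnn : ∀ v j, 0 ≤ h v j := fun v j => by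
    simp only [hhdef]
    exact mul_nonneg (by positivity) (RotaAux.dot_self_nonneg _)
  have hquad : ∀ v, v ⬝ᵥ (Q *ᵥ v) = ∑' j, h v j := fun v => by
    calc v ⬝ᵥ (Q *ᵥ v) = RotaAux.dotCLM v Q := (RotaAux.dotCLM_apply v Q).symm
      _ = ∑' j, RotaAux.dotCLM v (g j) := (RotaAux.dotCLM v).map_tsum hg
      _ = ∑' j, h v j := tsum_congr fun j => hterm v j
  have hh0 : ∀ v, h v 0 = v ⬝ᵥ v := fun v => by
    simp only [hhdef, pow_zero, one_mul, Matrix.one_mulVec]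
  -- Q is hermitian and positive definite
  have hQherm : Q.IsHermitian := by
    have hQt : Qᵀ = Q := by
      calc Qᵀ = RotaAux.transCLM Q := rfl
        _ = ∑' j, RotaAux.transCLM (g j) := RotaAux.transCLM.map_tsum hg
        _ = ∑' j, g j := tsum_congr fun j => by
            simp only [hgdef, RotaAux.transCLM_apply]
            rw [Matrix.transpose_smul, Matrix.transpose_mul, Matrix.transpose_transpose]
        _ = Q := rfl
    rw [Matrix.IsHermitian, Matrix.conjTranspose_eq_transpose_of_trivial, hQt]
  have hQpos : Q.PosDef := by
    refine Matrix.PosDef.of_dotProduct_mulVec_pos hQherm fun x hx => ?_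
    have hxx : (0:ℝ) < x ⬝ᵥ x := by
      refine lt_of_le_of_ne (RotaAux.dot_self_nonneg x) (Ne.symm ?_)
      intro hc
      exact hx (dotProduct_star_self_eq_zero.1 (by simpa using hc))
    have h0lt : (0:ℝ) < h x 0 := by rw [hh0]; exact hxx
    have hle : h x 0 ≤ ∑' j, h x j := (hsum_h x).le_tsum 0 fun j _ => hhnn x j
    have hq : (0:ℝ) < x ⬝ᵥ (Q *ᵥ x) := by rw [hquad]; exact h0lt.trans_le hle
    simpa using hq
  -- the square root
  set S : Matrix (Fin m) (Fin m) ℝ := CFC.sqrt Q with hSdef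
  have hSsd : S.PosSemidef := Matrix.nonneg_iff_posSemidef.1 (CFC.sqrt_nonneg Q)
  have hS2 : S * S = Q := CFC.sqrt_mul_sqrt_self Q (Matrix.nonneg_iff_posSemidef.2 hQpos.posSemidef)
  have hStr : Sᵀ = S := by
    rw [← Matrix.conjTranspose_eq_transpose_of_trivial]; exact hSsd.1
  have hdetS : IsUnit S.det := by
    have hq : S.det * S.det = Q.det := by rw [← Matrix.det_mul, hS2]
    have hne : S.det ≠ 0 := by
      intro h0
      have hd := hQpos.det_pos
      rw [← hq, h0, mul_zero] at hd
      exact lt_irrefl _ hd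
    exact hne.isUnit
  have hSunit : IsUnit S := (Matrix.isUnit_iff_isUnit_det S).2 hdetS
  have hSS : S * S⁻¹ = 1 := Matrix.mul_nonsing_inv S hdetS
  have hSS' : S⁻¹ * S = 1 := Matrix.nonsing_inv_mul S hdetS
  have hSv : ∀ v, (S *ᵥ v) ⬝ᵥ (S *ᵥ v) = v ⬝ᵥ (Q *ᵥ v) := fun v => by
    rw [← RotaAux.dot_transpose_mul S v, hStr, hS2]
  -- norm bounds for S and S⁻¹
  have hSinv : ‖S⁻¹‖ ≤ 1 := by
    refine RotaAux.opNorm_le_of_dot _ 1 zero_le_one fun x => ?_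
    have hxy : S *ᵥ (S⁻¹ *ᵥ x) = x := by
      rw [Matrix.mulVec_mulVec, hSS, Matrix.one_mulVec]
    calc (S⁻¹ *ᵥ x) ⬝ᵥ (S⁻¹ *ᵥ x)
        = h (S⁻¹ *ᵥ x) 0 := (hh0 _).symm
      _ ≤ ∑' j, h (S⁻¹ *ᵥ x) j := (hsum_h _).le_tsum 0 fun j _ => hhnn _ j
      _ = (S⁻¹ *ᵥ x) ⬝ᵥ (Q *ᵥ (S⁻¹ *ᵥ x)) := (hquad _).symm
      _ = (S *ᵥ (S⁻¹ *ᵥ x)) ⬝ᵥ (S *ᵥ (S⁻¹ *ᵥ x)) := (hSv _).symm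
      _ = x ⬝ᵥ x := by rw [hxy]
      _ = 1 ^ 2 * (x ⬝ᵥ x) := by ring
  set F : ℝ := ∑' j, f j with hF
  have hF0 : 0 ≤ F := tsum_nonneg hfnn
  have hS_le : ‖S‖ ≤ Real.sqrt F := by
    refine RotaAux.opNorm_le_of_dot _ _ (Real.sqrt_nonneg _) fun v => ?_
    rw [Real.sq_sqrt hF0]
    calc (S *ᵥ v) ⬝ᵥ (S *ᵥ v) = ∑' j, h v j := by rw [hSv, hquad]
      _ ≤ ∑' j, f j * (v ⬝ᵥ v) := by
          refine Summable.tsum_le_tsum (fun j => ?_) (hsum_h v) (hf'.mul_right _)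
          have hd := RotaAux.dot_mulVec_le (A ^ j) v
          calc h v j = ρ⁻¹ ^ j * ((A ^ j *ᵥ v) ⬝ᵥ (A ^ j *ᵥ v)) := by rw [hhdef]
            _ ≤ ρ⁻¹ ^ j * (‖A ^ j‖ ^ 2 * (v ⬝ᵥ v)) :=
                mul_le_mul_of_nonneg_left hd (by positivity)
            _ = f j * (v ⬝ᵥ v) := by
                simp only [hfdef, RotaAux.matOpNorm_eq]; ring
      _ = F * (v ⬝ᵥ v) := by rw [tsum_mul_right]
  -- the contraction
  set M : Matrix (Fin m) (Fin m) ℝ := S * A * S⁻¹ with hM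
  have hMdot : ∀ x : Fin m → ℝ,
      (M *ᵥ x) ⬝ᵥ (M *ᵥ x) ≤ (Real.sqrt ρ) ^ 2 * (x ⬝ᵥ x) := fun x => by
    rw [Real.sq_sqrt hρ0.le]
    set y := S⁻¹ *ᵥ x with hy
    have hxy : S *ᵥ y = x := by rw [hy, Matrix.mulVec_mulVec, hSS, Matrix.one_mulVec]
    set w := A *ᵥ y with hw
    have hMx : M *ᵥ x = S *ᵥ w := by
      rw [hM, hw, hy, ← Matrix.mulVec_mulVec, ← Matrix.mulVec_mulVec]
    have hAj : ∀ j : ℕ, A ^ j *ᵥ w = A ^ (j+1) *ᵥ y := fun j => by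
      rw [hw, Matrix.mulVec_mulVec, ← pow_succ]
    have hterm2 : ∀ j, h w j = ρ * h y (j+1) := fun j => by
      simp only [hhdef]
      rw [hAj j]
      have hrr : ρ * ρ⁻¹ ^ (j+1) = ρ⁻¹ ^ j := by
        rw [pow_succ]
        field_simp
      rw [← hrr]; ring
    have hshift_le : ∑' j, h y (j+1) ≤ ∑' j, h y j := by
      have hEq := (hsum_h y).tsum_eq_zero_add
      have h0 : 0 ≤ h y 0 := hhnn y 0
      linarith
    calc (M *ᵥ x) ⬝ᵥ (M *ᵥ x) = (S *ᵥ w) ⬝ᵥ (S *ᵥ w) := by rw [hMx]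
      _ = ∑' j, h w j := by rw [hSv, hquad]
      _ = ∑' j, ρ * h y (j+1) := tsum_congr hterm2
      _ = ρ * ∑' j, h y (j+1) := tsum_mul_left
      _ ≤ ρ * ∑' j, h y j := mul_le_mul_of_nonneg_left hshift_le hρ0.le
      _ = ρ * ((S *ᵥ y) ⬝ᵥ (S *ᵥ y)) := by rw [hSv, hquad]
      _ = ρ * (x ⬝ᵥ x) := by rw [hxy]
  have hMnorm : ‖M‖ ≤ Real.sqrt ρ :=
    RotaAux.opNorm_le_of_dot _ _ (Real.sqrt_nonneg _) hMdot
  have hsρ0 : (0:ℝ) < Real.sqrt ρ := Real.sqrt_pos.2 hρ0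
  set C : Matrix (Fin m) (Fin m) ℝ := (Real.sqrt ρ)⁻¹ • M with hC
  have hCnorm : matOpNorm C ≤ 1 := by
    rw [RotaAux.matOpNorm_eq, hC, norm_smul, Real.norm_eq_abs, abs_inv,
      abs_of_pos hsρ0]
    calc (Real.sqrt ρ)⁻¹ * ‖M‖ ≤ (Real.sqrt ρ)⁻¹ * Real.sqrt ρ :=
          mul_le_mul_of_nonneg_left hMnorm (inv_nonneg.2 hsρ0.le)
      _ = 1 := inv_mul_cancel₀ hsρ0.ne'
  refine ⟨S, C, hSunit, hCnorm, ?_, ?_⟩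
  · -- norm product bound
    rcases Nat.eq_zero_or_pos m with hm | hm
    · subst hm
      have hS0 : S = 0 := by ext i j; exact i.elim0
      have hz : matOpNorm (0 : Matrix (Fin 0) (Fin 0) ℝ) = 0 := by
        rw [RotaAux.matOpNorm_eq, norm_zero]
      rw [hS0, hz, zero_mul]
      exact tsum_nonneg hfnn
    · have h1 : matOpNorm S * matOpNorm S⁻¹ ≤ Real.sqrt F * 1 := by
        rw [RotaAux.matOpNorm_eq, RotaAux.matOpNorm_eq]
        exact mul_le_mul hS_le hSinv (norm_nonneg _) (Real.sqrt_nonneg _)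
      haveI : Nonempty (Fin m) := ⟨⟨0, hm⟩⟩
      haveI : Nontrivial (EuclideanSpace ℝ (Fin m)) := by infer_instance
      have hone : f 0 = 1 := by
        simp only [hfdef, pow_zero, one_mul]
        have : matOpNorm (1 : Matrix (Fin m) (Fin m) ℝ) = 1 := by
          rw [show matOpNorm (1 : Matrix (Fin m) (Fin m) ℝ)
              = ‖Matrix.toEuclideanCLM (𝕜 := ℝ) (1 : Matrix (Fin m) (Fin m) ℝ)‖ from rfl,
            _root_.map_one]
          exact ContinuousLinearMap.norm_id
        rw [this, one_pow]
      have h1F : 1 ≤ F := by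
        calc (1:ℝ) = f 0 := hone.symm
          _ ≤ F := hf'.le_tsum 0 fun j _ => hfnn j
      have h2 : Real.sqrt F ≤ F := by
        calc Real.sqrt F ≤ Real.sqrt (F * F) :=
              Real.sqrt_le_sqrt (le_mul_of_one_le_left hF0 h1F)
          _ = F := Real.sqrt_mul_self hF0
      calc matOpNorm S * matOpNorm S⁻¹ ≤ Real.sqrt F * 1 := h1
        _ = Real.sqrt F := mul_one _
        _ ≤ F := h2
  · -- the similarity
    rw [hC, hM, Matrix.mul_smul, Matrix.smul_mul, smul_smul,
      mul_inv_cancel₀ hsρ0.ne', one_smul]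
    calc A = 1 * A * 1 := by rw [one_mul, mul_one]
      _ = (S⁻¹ * S) * A * (S⁻¹ * S) := by rw [hSS']
      _ = S⁻¹ * (S * A * S⁻¹) * S := by
          simp only [Matrix.mul_assoc]
end

section
/- Let (h_j)_{j=0}^{n-1} and (d_j)_{j=0}^{n-1} be nonnegative reals with h_0 ≤ d_0 and h_j ≤ d_j + c(Σ_{ℓ=0}^{j-1} √ρ_{j-ℓ} √h_ℓ)² for j ≥ 1, where c ≥ 0 and ρ_1, …, ρ_{n-1} ≥ 0 satisfy (Σ_{ℓ=1}^{n-1} √ρ_ℓ)² ≤ R. Then Σ_{j=0}^{n-1} h_j ≤ (Σ_{ℓ=0}^{n-1} (cR)^ℓ) · Σ_{j=0}^{n-1} d_j. -/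
open Finset Real

/-- Convolution-type recursion from the proof of Theorem 5.1(iii):
if `h 0 ≤ d 0` and `h j ≤ d j + c * (∑_{ℓ=0}^{j-1} √ρ_{j-ℓ} √h_ℓ)²` for `1 ≤ j ≤ n-1`,
with `(∑_{ℓ=1}^{n-1} √ρ_ℓ)² ≤ R`, then
`∑_{j=0}^{n-1} h j ≤ (∑_{ℓ=0}^{n-1} (cR)^ℓ) * ∑_{j=0}^{n-1} d j`. -/
theorem convolution_recursion (n : ℕ) (hn : 1 ≤ n) (h d ρ : ℕ → ℝ) (c R : ℝ)
    (hc : 0 ≤ c) (hhn : ∀ j, 0 ≤ h j) (hdn : ∀ j, 0 ≤ d j) (hρn : ∀ j, 0 ≤ ρ j)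
    (h0 : h 0 ≤ d 0)
    (hrec : ∀ j, 1 ≤ j → j ≤ n - 1 →
      h j ≤ d j + c * (∑ ℓ ∈ range j, Real.sqrt (ρ (j - ℓ)) * Real.sqrt (h ℓ)) ^ 2)
    (hR : (∑ ℓ ∈ Icc 1 (n - 1), Real.sqrt (ρ ℓ)) ^ 2 ≤ R) :
    ∑ j ∈ range n, h j ≤ (∑ ℓ ∈ range n, (c * R) ^ ℓ) * ∑ j ∈ range n, d j := by
  set A : ℝ := ∑ ℓ ∈ Icc 1 (n - 1), Real.sqrt (ρ ℓ) with hAdef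
  have hA0 : 0 ≤ A := Finset.sum_nonneg fun i _ => Real.sqrt_nonneg _
  have hR0 : 0 ≤ R := (sq_nonneg A).trans hR
  set D : ℝ := ∑ j ∈ range n, d j with hDdef
  have hD0 : 0 ≤ D := Finset.sum_nonneg fun i _ => hdn i
  -- partial sums of √ρ are bounded by A
  have hpart : ∀ j, j ≤ n - 1 → ∑ ℓ ∈ range j, Real.sqrt (ρ (j - ℓ)) ≤ A := by
    intro j hj
    have e : ∑ ℓ ∈ range j, Real.sqrt (ρ (j - ℓ)) = ∑ m ∈ Icc 1 j, Real.sqrt (ρ m) := by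
      refine Finset.sum_nbij' (fun ℓ => j - ℓ) (fun m => j - m) ?_ ?_ ?_ ?_ ?_ <;>
        intro a ha <;> simp only [Finset.mem_range, Finset.mem_Icc] at * <;>
        first | rfl | omega
    rw [e]
    exact Finset.sum_le_sum_of_subset_of_nonneg (Finset.Icc_subset_Icc_right hj)
      (fun _ _ _ => Real.sqrt_nonneg _)
  have hpart' : ∀ ℓ k, k ≤ n - 1 → ∑ j ∈ Icc (ℓ + 1) k, Real.sqrt (ρ (j - ℓ)) ≤ A := by
    intro ℓ k hk
    have e : ∑ j ∈ Icc (ℓ + 1) k, Real.sqrt (ρ (j - ℓ))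
        = ∑ m ∈ Icc 1 (k - ℓ), Real.sqrt (ρ m) := by
      refine Finset.sum_nbij' (fun j => j - ℓ) (fun m => m + ℓ) ?_ ?_ ?_ ?_ ?_ <;>
        intro a ha <;> simp only [Finset.mem_Icc] at * <;>
        first | rfl | omega
    rw [e]
    exact Finset.sum_le_sum_of_subset_of_nonneg (Finset.Icc_subset_Icc_right (by omega))
      (fun _ _ _ => Real.sqrt_nonneg _)
  -- Young / Cauchy–Schwarz convolution bound
  have young : ∀ k, k ≤ n - 1 →
      ∑ j ∈ Icc 1 k, (∑ ℓ ∈ range j, Real.sqrt (ρ (j - ℓ)) * Real.sqrt (h ℓ)) ^ 2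
        ≤ R * ∑ ℓ ∈ range k, h ℓ := by
    intro k hk
    have step1 : ∀ j ∈ Icc 1 k,
        (∑ ℓ ∈ range j, Real.sqrt (ρ (j - ℓ)) * Real.sqrt (h ℓ)) ^ 2
          ≤ A * ∑ ℓ ∈ range j, Real.sqrt (ρ (j - ℓ)) * h ℓ := by
      intro j hj
      rw [Finset.mem_Icc] at hj
      have hj' : j ≤ n - 1 := le_trans hj.2 hk
      have cs := Finset.sum_sq_le_sum_mul_sum_of_sq_eq_mul (range j)
        (r := fun ℓ => Real.sqrt (ρ (j - ℓ)) * Real.sqrt (h ℓ))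
        (f := fun ℓ => Real.sqrt (ρ (j - ℓ)))
        (g := fun ℓ => Real.sqrt (ρ (j - ℓ)) * h ℓ)
        (fun i _ => Real.sqrt_nonneg _)
        (fun i _ => mul_nonneg (Real.sqrt_nonneg _) (hhn i))
        (fun i _ => by
          rw [mul_pow, Real.sq_sqrt (hhn _), pow_two, mul_assoc])
      refine cs.trans ?_
      have hg0 : 0 ≤ ∑ ℓ ∈ range j, Real.sqrt (ρ (j - ℓ)) * h ℓ :=
        Finset.sum_nonneg fun i _ => mul_nonneg (Real.sqrt_nonneg _) (hhn i)
      exact mul_le_mul_of_nonneg_right (hpart j hj') hg0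
    calc ∑ j ∈ Icc 1 k, (∑ ℓ ∈ range j, Real.sqrt (ρ (j - ℓ)) * Real.sqrt (h ℓ)) ^ 2
        ≤ ∑ j ∈ Icc 1 k, A * ∑ ℓ ∈ range j, Real.sqrt (ρ (j - ℓ)) * h ℓ :=
          Finset.sum_le_sum step1
      _ = A * ∑ j ∈ Icc 1 k, ∑ ℓ ∈ range j, Real.sqrt (ρ (j - ℓ)) * h ℓ := by
          rw [Finset.mul_sum]
      _ = A * ∑ ℓ ∈ range k, ∑ j ∈ Icc (ℓ + 1) k, Real.sqrt (ρ (j - ℓ)) * h ℓ := by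
          congr 1
          exact Finset.sum_comm' (by
            intro x y; simp only [Finset.mem_Icc, Finset.mem_range]; omega)
      _ ≤ A * ∑ ℓ ∈ range k, A * h ℓ := by
          apply mul_le_mul_of_nonneg_left ?_ hA0
          apply Finset.sum_le_sum
          intro ℓ _
          rw [← Finset.sum_mul]
          exact mul_le_mul_of_nonneg_right (hpart' ℓ k hk) (hhn ℓ)
      _ = A ^ 2 * ∑ ℓ ∈ range k, h ℓ := by rw [← Finset.mul_sum]; ring
      _ ≤ R * ∑ ℓ ∈ range k, h ℓ :=
          mul_le_mul_of_nonneg_right hR (Finset.sum_nonneg fun i _ => hhn i)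
  -- main induction
  have main : ∀ k, k ≤ n → ∑ j ∈ range k, h j ≤ (∑ ℓ ∈ range k, (c * R) ^ ℓ) * D := by
    intro k
    induction k with
    | zero => intro _; simp
    | succ k ih =>
      intro hk1
      have ihk := ih (by omega)
      rcases Nat.eq_zero_or_pos k with hk0 | hkpos
      · subst hk0
        simpa using h0.trans (Finset.single_le_sum (fun i _ => hdn i)
          (Finset.mem_range.mpr hn))
      · have hkn : k ≤ n - 1 := by omega
        have shift : ∀ f : ℕ → ℝ, ∑ j ∈ Icc 1 k, f j = ∑ i ∈ range k, f (i + 1) := by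
          intro f
          refine Finset.sum_nbij' (fun j => j - 1) (fun i => i + 1) ?_ ?_ ?_ ?_ ?_ <;>
            intro a ha <;> simp only [Finset.mem_Icc, Finset.mem_range] at * <;>
            first | omega | (congr 1; omega)
        have split : ∑ j ∈ range (k + 1), h j = h 0 + ∑ j ∈ Icc 1 k, h j := by
          rw [Finset.sum_range_succ' h k, shift h]; exact add_comm _ _
        have splitd : ∑ j ∈ range (k + 1), d j = d 0 + ∑ j ∈ Icc 1 k, d j := by
          rw [Finset.sum_range_succ' d k, shift d]; exact add_comm _ _
        have hdk : ∑ j ∈ range (k + 1), d j ≤ D :=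
          Finset.sum_le_sum_of_subset_of_nonneg
            (Finset.range_subset_range.mpr hk1) (fun i _ _ => hdn i)
        calc ∑ j ∈ range (k + 1), h j
            = h 0 + ∑ j ∈ Icc 1 k, h j := split
          _ ≤ d 0 + ∑ j ∈ Icc 1 k,
                (d j + c * (∑ ℓ ∈ range j, Real.sqrt (ρ (j - ℓ)) * Real.sqrt (h ℓ)) ^ 2) := by
              apply add_le_add h0
              apply Finset.sum_le_sum
              intro j hj
              rw [Finset.mem_Icc] at hj
              exact hrec j hj.1 (le_trans hj.2 hkn)
          _ = (d 0 + ∑ j ∈ Icc 1 k, d j)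
                + c * ∑ j ∈ Icc 1 k,
                  (∑ ℓ ∈ range j, Real.sqrt (ρ (j - ℓ)) * Real.sqrt (h ℓ)) ^ 2 := by
              rw [Finset.sum_add_distrib, Finset.mul_sum]; ring
          _ ≤ D + c * (R * ∑ ℓ ∈ range k, h ℓ) := by
              apply add_le_add (splitd ▸ hdk)
              exact mul_le_mul_of_nonneg_left (young k hkn) hc
          _ ≤ D + c * (R * ((∑ ℓ ∈ range k, (c * R) ^ ℓ) * D)) := by
              apply add_le_add_right
              exact mul_le_mul_of_nonneg_left
                (mul_le_mul_of_nonneg_left ihk hR0) hc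
          _ = ((c * R) * ∑ ℓ ∈ range k, (c * R) ^ ℓ + 1) * D := by ring
          _ = (∑ ℓ ∈ range (k + 1), (c * R) ^ ℓ) * D := by
              rw [geom_sum_succ]
  exact main n le_rfl
end
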